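/- Let d ≥ 1 and m ≥ 1 be integers, n = 2m + d − 1, and ε ∈ (0, 1]. For w ∈ {0,1}^m define u^w ∈ ℝ^{2m} whose first m entries equal 1 and whose last m entries equal εw, and define U^w ∈ ℝ^{n×d} whose first column is (u^w, 0_{d−1}), whose bottom-right (d−1)×(d−1) block is the identity I_{d−1}, and which is zero elsewhere. Then for all w₁, w₂ ∈ {0,1}^m with ‖w₁‖₀ = ‖w₂‖₀ = n₀: (i) ‖U^{w₁}(U^{w₁})ᵀ − U^{w₂}(U^{w₂})ᵀ‖_F² ≥ m · ε² · d_H(w₁, w₂); and (ii) ‖U^{w₁}(U^{w₁})ᵀ − U^{w₂}(U^{w₂})ᵀ‖_F ≤ 2√n · ε · √(d_H(w₁, w₂)), where d_H denotes Hamming distance and ‖w‖₀ the number of nonzero entries of w. -/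

import Mathlib

open scoped Matrix
open Finset

/-- Frobenius norm of a real matrix. -/
noncomputable def frob {m l : Type*} [Fintype m] [Fintype l] (A : Matrix m l ℝ) : ℝ :=
  Real.sqrt (∑ i, ∑ j, (A i j) ^ 2)

/-- The symmetric-case hypothesis matrix `U^w ∈ ℝ^{n×d}` with `n = 2m + d − 1`:
its first column is `(u^w, 0_{d−1})` where `u^w ∈ ℝ^{2m}` has first `m` entries `1` and
last `m` entries `εw`; the bottom-right `(d−1)×(d−1)` block is the identity; the rest is 0. -/
noncomputable def Usym (m d : ℕ) (ε : ℝ) (w : Fin m → ℝ) :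
    Matrix (Fin (2 * m + (d - 1))) (Fin d) ℝ :=
  Matrix.of fun i c =>
    if (c : ℕ) = 0 then
      (if (i : ℕ) < m then 1
       else if h : (i : ℕ) < 2 * m then ε * w ⟨(i : ℕ) - m, by omega⟩ else 0)
    else (if (i : ℕ) = 2 * m + (c : ℕ) - 1 then 1 else 0)

noncomputable def extw (m : ℕ) (w : Fin m → ℝ) (j : ℕ) : ℝ :=
  if h : j < m then w ⟨j, h⟩ else 0

noncomputable def colf (m : ℕ) (ε : ℝ) (w : ℕ → ℝ) (i : ℕ) : ℝ :=
  if i < m then 1 else if i < 2 * m then ε * w (i - m) else 0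

lemma Usym_col0 (m d : ℕ) (ε : ℝ) (w : Fin m → ℝ) (i : Fin (2 * m + (d - 1))) (c : Fin d)
    (hc : (c : ℕ) = 0) :
    Usym m d ε w i c = colf m ε (extw m w) (i : ℕ) := by
  simp only [Usym, Matrix.of_apply, hc, if_pos]
  unfold colf extw
  split_ifs <;> first | rfl | omega

lemma diff_entry (m d : ℕ) (hd : 1 ≤ d) (ε : ℝ) (w₁ w₂ : Fin m → ℝ)
    (i j : Fin (2 * m + (d - 1))) :
    (Usym m d ε w₁ * (Usym m d ε w₁)ᵀ - Usym m d ε w₂ * (Usym m d ε w₂)ᵀ) i j =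
      colf m ε (extw m w₁) i * colf m ε (extw m w₁) j
        - colf m ε (extw m w₂) i * colf m ε (extw m w₂) j := by
  simp only [Matrix.sub_apply, Matrix.mul_apply, Matrix.transpose_apply]
  rw [← Finset.sum_sub_distrib]
  rw [Finset.sum_eq_single_of_mem (⟨0, by omega⟩ : Fin d) (mem_univ _)]
  · rw [Usym_col0 m d ε w₁ i _ rfl, Usym_col0 m d ε w₁ j _ rfl,
      Usym_col0 m d ε w₂ i _ rfl, Usym_col0 m d ε w₂ j _ rfl]
  · intro c _ hc
    have hc0 : (c : ℕ) ≠ 0 := fun h => hc (Fin.ext h)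
    simp only [Usym, Matrix.of_apply, if_neg hc0, sub_self]

lemma sum_piece (m e : ℕ) (φ : ℕ → ℝ) :
    ∑ i : Fin (2 * m + e),
      (if (i : ℕ) < m then (1 : ℝ) else if (i : ℕ) < 2 * m then φ ((i : ℕ) - m) else 0)
    = m + ∑ j ∈ Finset.range m, φ j := by
  rw [Fin.sum_univ_eq_sum_range
    (fun i => if i < m then (1 : ℝ) else if i < 2 * m then φ (i - m) else 0), Finset.range_eq_Ico,
    ← Finset.sum_Ico_consecutive _ (Nat.zero_le (2 * m)) (by omega : 2 * m ≤ 2 * m + e),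
    ← Finset.sum_Ico_consecutive _ (Nat.zero_le m) (by omega : m ≤ 2 * m)]
  have h1 : ∑ i ∈ Finset.Ico 0 m,
      (if i < m then (1 : ℝ) else if i < 2 * m then φ (i - m) else 0) = m := by
    rw [Finset.sum_congr rfl fun i hi => if_pos (Finset.mem_Ico.mp hi).2]
    simp
  have h2 : ∑ i ∈ Finset.Ico m (2 * m),
      (if i < m then (1 : ℝ) else if i < 2 * m then φ (i - m) else 0)
      = ∑ j ∈ Finset.range m, φ j := by
    have : ∀ i ∈ Finset.Ico m (2 * m),
        (if i < m then (1 : ℝ) else if i < 2 * m then φ (i - m) else 0) = φ (i - m) := by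
      intro i hi
      rw [Finset.mem_Ico] at hi
      rw [if_neg (by omega), if_pos hi.2]
    rw [Finset.sum_congr rfl this, Finset.sum_Ico_eq_sum_range]
    have : 2 * m - m = m := by omega
    rw [this]
    apply Finset.sum_congr rfl
    intro x _
    congr 1
    omega
  have h3 : ∑ i ∈ Finset.Ico (2 * m) (2 * m + e),
      (if i < m then (1 : ℝ) else if i < 2 * m then φ (i - m) else 0) = 0 := by
    apply Finset.sum_eq_zero
    intro i hi
    rw [Finset.mem_Ico] at hi
    rw [if_neg (by omega), if_neg (by omega)]
  rw [h1, h2, h3, add_zero]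

lemma colf_mul (m : ℕ) (ε : ℝ) (u v : ℕ → ℝ) (i : ℕ) :
    colf m ε u i * colf m ε v i =
      if i < m then (1 : ℝ) else if i < 2 * m then ε ^ 2 * (u (i - m) * v (i - m)) else 0 := by
  unfold colf
  split_ifs <;> ring

lemma sum_colf_mul (m e : ℕ) (ε : ℝ) (u v : ℕ → ℝ) :
    ∑ i : Fin (2 * m + e), colf m ε u (i : ℕ) * colf m ε v (i : ℕ)
      = m + ε ^ 2 * ∑ j ∈ Finset.range m, u j * v j := by
  simp only [colf_mul]
  rw [sum_piece m e (fun j => ε ^ 2 * (u j * v j)), ← Finset.mul_sum]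

lemma sq_sum_identity (n : ℕ) (a b : Fin n → ℝ) :
    ∑ i, ∑ j, (a i * a j - b i * b j) ^ 2 =
      (∑ i, a i ^ 2) ^ 2 + (∑ i, b i ^ 2) ^ 2 - 2 * (∑ i, a i * b i) ^ 2 := by
  have key : ∀ i j, (a i * a j - b i * b j) ^ 2 =
      a i ^ 2 * a j ^ 2 + b i ^ 2 * b j ^ 2 - 2 * ((a i * b i) * (a j * b j)) := by
    intro i j; ring
  simp_rw [key, Finset.sum_sub_distrib, Finset.sum_add_distrib, ← Finset.mul_sum,
    ← Finset.sum_mul]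
  ring

lemma arith_lower (mR n₀R KR εR hR : ℝ) (hε1 : 0 < εR) (hK : KR ≤ n₀R) (hKpos : 0 ≤ KR)
    (hnm : n₀R ≤ mR) (hhR : hR = 2 * n₀R - 2 * KR) :
    mR * εR ^ 2 * hR ≤ 2 * (mR + εR ^ 2 * n₀R) ^ 2 - 2 * (mR + εR ^ 2 * KR) ^ 2 := by
  rw [hhR]
  nlinarith [mul_nonneg (mul_nonneg (sq_nonneg εR) (sub_nonneg.mpr hK))
    (by nlinarith [sq_nonneg εR] : (0:ℝ) ≤ mR + εR ^ 2 * (n₀R + KR))]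

lemma arith_upper (mR n₀R KR εR hR nR : ℝ) (hε1 : 0 < εR) (hε2 : εR ≤ 1) (hK : KR ≤ n₀R)
    (hKpos : 0 ≤ KR) (hnm : n₀R ≤ mR) (hhR : hR = 2 * n₀R - 2 * KR) (hnn : 2 * mR ≤ nR) :
    2 * (mR + εR ^ 2 * n₀R) ^ 2 - 2 * (mR + εR ^ 2 * KR) ^ 2 ≤ 4 * nR * εR ^ 2 * hR := by
  rw [hhR]
  have hε2' : εR ^ 2 ≤ 1 := by nlinarith
  have H : (0:ℝ) ≤ 4 * nR - 2 * mR - εR ^ 2 * (n₀R + KR) := by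
    nlinarith [mul_nonneg (sub_nonneg.mpr hε2') (by linarith : (0:ℝ) ≤ n₀R + KR)]
  nlinarith [mul_nonneg (mul_nonneg (sq_nonneg εR) (sub_nonneg.mpr hK)) H]


/-- two-sided separation bounds for the symmetric hypothesis construction:
for binary `w₁, w₂` with common sparsity `n₀` and `ε ∈ (0,1]`,
`m·ε²·d_H(w₁,w₂) ≤ ‖U^{w₁}(U^{w₁})ᵀ − U^{w₂}(U^{w₂})ᵀ‖_F²` and
`‖U^{w₁}(U^{w₁})ᵀ − U^{w₂}(U^{w₂})ᵀ‖_F ≤ 2√n·ε·√(d_H(w₁,w₂))`. -/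
theorem stmt_13 (d m : ℕ) (hd : 1 ≤ d) (hm : 1 ≤ m)
    (ε : ℝ) (hε1 : 0 < ε) (hε2 : ε ≤ 1)
    (w₁ w₂ : Fin m → ℝ)
    (hw₁ : ∀ i, w₁ i = 0 ∨ w₁ i = 1) (hw₂ : ∀ i, w₂ i = 0 ∨ w₂ i = 1)
    (n₀ : ℕ)
    (hn₁ : (Finset.univ.filter fun i => w₁ i ≠ 0).card = n₀)
    (hn₂ : (Finset.univ.filter fun i => w₂ i ≠ 0).card = n₀) :
    (m : ℝ) * ε ^ 2 * ((Finset.univ.filter fun i => w₁ i ≠ w₂ i).card : ℝ) ≤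
        (frob (Usym m d ε w₁ * (Usym m d ε w₁)ᵀ - Usym m d ε w₂ * (Usym m d ε w₂)ᵀ)) ^ 2 ∧
      frob (Usym m d ε w₁ * (Usym m d ε w₁)ᵀ - Usym m d ε w₂ * (Usym m d ε w₂)ᵀ) ≤
        2 * Real.sqrt ((2 * m + (d - 1) : ℕ) : ℝ) * ε *
          Real.sqrt ((Finset.univ.filter fun i => w₁ i ≠ w₂ i).card : ℝ) := by
  classical
  set A := Finset.univ.filter fun i => w₁ i ≠ 0 with hA
  set B := Finset.univ.filter fun i => w₂ i ≠ 0 with hB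
  set K := (A ∩ B).card with hKdef
  set h := (Finset.univ.filter fun i : Fin m => w₁ i ≠ w₂ i).card with hhdef
  -- combinatorial facts
  have hK_le : K ≤ n₀ := by
    rw [← hn₁]; exact Finset.card_le_card (Finset.inter_subset_left)
  have hn₀m : n₀ ≤ m := by
    rw [← hn₁]
    simpa using Finset.card_le_univ A
  have hfilter_eq : (Finset.univ.filter fun i : Fin m => w₁ i ≠ w₂ i) = (A ∪ B) \ (A ∩ B) := by
    ext i
    simp only [hA, hB, Finset.mem_filter, Finset.mem_univ, true_and, Finset.mem_sdiff,
      Finset.mem_union, Finset.mem_inter]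
    rcases hw₁ i with h1 | h1 <;> rcases hw₂ i with h2 | h2 <;>
      simp [h1, h2] <;> norm_num
  have hcard : h + 2 * K = 2 * n₀ := by
    have hsub : A ∩ B ⊆ A ∪ B := Finset.inter_subset_union
    have e1 : h + K = (A ∪ B).card := by
      rw [hhdef, hfilter_eq]
      exact Finset.card_sdiff_add_card_eq_card hsub
    have e2 : (A ∪ B).card + K = n₀ + n₀ := by
      rw [hKdef, Finset.card_union_add_card_inter, hn₁, hn₂]
    omega
  -- sums over range m
  have hext : ∀ (u v : Fin m → ℝ),
      ∑ j ∈ Finset.range m, extw m u j * extw m v j = ∑ j : Fin m, u j * v j := by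
    intro u v
    rw [← Fin.sum_univ_eq_sum_range (fun j => extw m u j * extw m v j) m]
    apply Finset.sum_congr rfl
    intro j _
    simp [extw]
  have hboole : ∀ (u v : Fin m → ℝ), (∀ i, u i = 0 ∨ u i = 1) → (∀ i, v i = 0 ∨ v i = 1) →
      ∑ j : Fin m, u j * v j =
        ((Finset.univ.filter fun i => u i ≠ 0 ∧ v i ≠ 0).card : ℝ) := by
    intro u v hu hv
    rw [← Finset.sum_boole]
    apply Finset.sum_congr rfl
    intro j _
    rcases hu j with h1 | h1 <;> rcases hv j with h2 | h2 <;> simp [h1, h2]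
  have hw11 : ∑ j ∈ Finset.range m, extw m w₁ j * extw m w₁ j = (n₀ : ℝ) := by
    rw [hext, hboole w₁ w₁ hw₁ hw₁]
    norm_cast
    rw [← hn₁]
    congr 1
    apply Finset.filter_congr
    intro i _
    tauto
  have hw22 : ∑ j ∈ Finset.range m, extw m w₂ j * extw m w₂ j = (n₀ : ℝ) := by
    rw [hext, hboole w₂ w₂ hw₂ hw₂]
    norm_cast
    rw [← hn₂]
    congr 1
    apply Finset.filter_congr
    intro i _
    tauto
  have hw12 : ∑ j ∈ Finset.range m, extw m w₁ j * extw m w₂ j = (K : ℝ) := by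
    rw [hext, hboole w₁ w₂ hw₁ hw₂]
    norm_cast
    rw [hKdef]
    congr 1
    ext i
    simp [hA, hB]
  -- the difference matrix entries
  set a : Fin (2 * m + (d - 1)) → ℝ := fun i => colf m ε (extw m w₁) (i : ℕ) with ha
  set b : Fin (2 * m + (d - 1)) → ℝ := fun i => colf m ε (extw m w₂) (i : ℕ) with hb
  set D := Usym m d ε w₁ * (Usym m d ε w₁)ᵀ - Usym m d ε w₂ * (Usym m d ε w₂)ᵀ with hD
  have hDE : ∀ i j, D i j = a i * a j - b i * b j := by
    intro i j
    rw [hD, diff_entry m d hd ε w₁ w₂ i j]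
  have hSval : ∑ i, ∑ j, (D i j) ^ 2 =
      2 * ((m : ℝ) + ε ^ 2 * n₀) ^ 2 - 2 * ((m : ℝ) + ε ^ 2 * K) ^ 2 := by
    simp_rw [hDE]
    rw [sq_sum_identity]
    have e1 : ∑ i, a i ^ 2 = (m : ℝ) + ε ^ 2 * n₀ := by
      simp_rw [ha, sq]
      rw [sum_colf_mul, hw11]
      ring
    have e2 : ∑ i, b i ^ 2 = (m : ℝ) + ε ^ 2 * n₀ := by
      simp_rw [hb, sq]
      rw [sum_colf_mul, hw22]
      ring
    have e3 : ∑ i, a i * b i = (m : ℝ) + ε ^ 2 * K := by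
      simp_rw [ha, hb]
      rw [sum_colf_mul, hw12]
    rw [e1, e2, e3]
    ring
  have hSnonneg : (0:ℝ) ≤ ∑ i, ∑ j, (D i j) ^ 2 := by positivity
  have hfrob_sq : (frob D) ^ 2 = ∑ i, ∑ j, (D i j) ^ 2 := by
    rw [frob, Real.sq_sqrt hSnonneg]
  have hhR : (h : ℝ) = 2 * (n₀ : ℝ) - 2 * (K : ℝ) := by
    have h2 : ((h : ℝ) + 2 * K) = 2 * n₀ := by exact_mod_cast hcard
    linarith
  have hKn : (K : ℝ) ≤ (n₀ : ℝ) := by exact_mod_cast hK_le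
  have hnm : (n₀ : ℝ) ≤ (m : ℝ) := by exact_mod_cast hn₀m
  have hKpos : (0:ℝ) ≤ (K : ℝ) := Nat.cast_nonneg _
  constructor
  · rw [hfrob_sq, hSval]
    exact arith_lower _ _ _ _ _ hε1 hKn hKpos hnm hhR
  · have hnn : (2 * (m : ℝ)) ≤ ((2 * m + (d - 1) : ℕ) : ℝ) := by
      push_cast
      nlinarith [Nat.cast_nonneg (α := ℝ) (d - 1)]
    have hnpos : (0:ℝ) ≤ ((2 * m + (d - 1) : ℕ) : ℝ) := Nat.cast_nonneg _
    have hhpos : (0:ℝ) ≤ (h : ℝ) := Nat.cast_nonneg _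
    have hRHSsq : (2 * Real.sqrt ((2 * m + (d - 1) : ℕ) : ℝ) * ε * Real.sqrt (h : ℝ)) ^ 2
        = 4 * ((2 * m + (d - 1) : ℕ) : ℝ) * ε ^ 2 * (h : ℝ) := by
      rw [mul_pow, mul_pow, mul_pow, Real.sq_sqrt hnpos, Real.sq_sqrt hhpos]
      ring
    have hSle : ∑ i, ∑ j, (D i j) ^ 2 ≤
        4 * ((2 * m + (d - 1) : ℕ) : ℝ) * ε ^ 2 * (h : ℝ) := by
      rw [hSval]
      exact arith_upper _ _ _ _ _ _ hε1 hε2 hKn hKpos hnm hhR hnn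
    have hR0 : (0:ℝ) ≤ 2 * Real.sqrt ((2 * m + (d - 1) : ℕ) : ℝ) * ε * Real.sqrt (h : ℝ) := by
      positivity
    exact le_of_pow_le_pow_left₀ two_ne_zero hR0 (by rw [hfrob_sq, hRHSsq]; exact hSle)
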